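/- arXiv:1704.02054 — 7 statements merged into one kernel-verified Lean document; each statement's English description precedes it below -/
import Mathlib

section
/- For integers n ≥ m ≥ k ≥ 0 with m ≥ 1, C(n,k)/C(m,k) ≥ (n/m)^k * exp((n-m)/(n*m) * k*(k-1)/2). -/
open Finset in
lemma aux_factor (a b x : ℝ) (hx : 0 ≤ x) (hba : b ≤ a) (hxb : x + 1 ≤ b) :
    a / b * Real.exp ((a - b) / (a * b) * x) ≤ (a - x) / (b - x) := by
  have hb : (1:ℝ) ≤ b := by linarith
  have ha : (1:ℝ) ≤ a := le_trans hb hba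
  have hbx : 0 < b - x := by linarith
  have hax : 0 < a - x := by linarith
  have hab : 0 < a * b := by positivity
  set t : ℝ := (a - b) / (a * b) * x with ht
  have ht0 : 0 ≤ t := by
    apply mul_nonneg _ hx
    apply div_nonneg (by linarith) hab.le
  have h1t : 0 < 1 - t := by
    rw [ht, sub_pos]
    rw [div_mul_eq_mul_div, div_lt_one hab]
    nlinarith
  have hexp : Real.exp t ≤ 1 / (1 - t) := by
    rw [le_div_iff₀ h1t]
    have := Real.add_one_le_exp (-t)
    calc Real.exp t * (1 - t) ≤ Real.exp t * Real.exp (-t) := by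
          apply mul_le_mul_of_nonneg_left (by linarith) (Real.exp_nonneg t)
      _ = 1 := by rw [← Real.exp_add]; simp
  calc a / b * Real.exp t ≤ a / b * (1 / (1 - t)) := by
        apply mul_le_mul_of_nonneg_left hexp (by positivity)
    _ ≤ (a - x) / (b - x) := by
        rw [div_mul_div_comm, mul_one, div_le_div_iff₀ (by positivity) hbx]
        have h1t' : b * (1 - t) = (a * b - (a - b) * x) / a := by
          rw [ht]
          field_simp [(show (0:ℝ) < a by linarith).ne', (show (0:ℝ) < b by linarith).ne']
        rw [h1t', mul_div_assoc', le_div_iff₀ (show (0:ℝ) < a by linarith)]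
        nlinarith [mul_nonneg (mul_nonneg hx hx) (sub_nonneg.2 hba)]

open Finset in
theorem binom_ratio_lower_exp (n m k : ℕ) (hmn : m ≤ n) (hkm : k ≤ m) (hm : 1 ≤ m) :
    ((n : ℝ) / m) ^ k *
      Real.exp (((n : ℝ) - m) / ((n : ℝ) * m) * ((k : ℝ) * ((k : ℝ) - 1) / 2))
    ≤ (n.choose k : ℝ) / (m.choose k : ℝ) := by
  have hmR : (0:ℝ) < m := by exact_mod_cast hm
  have hnR : (0:ℝ) < n := by exact_mod_cast lt_of_lt_of_le hm hmn
  -- ratio of choose equals product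
  have hprod : (n.choose k : ℝ) / (m.choose k : ℝ)
      = ∏ i ∈ range k, (((n:ℝ) - i) / ((m:ℝ) - i)) := by
    have h1 : ((n.descFactorial k : ℕ) : ℝ) = ∏ i ∈ range k, ((n:ℝ) - i) := by
      rw [Nat.descFactorial_eq_prod_range]
      rw [Nat.cast_prod]
      apply Finset.prod_congr rfl
      intro i hi
      have : i ≤ n := le_trans (le_of_lt (mem_range.1 hi)) (le_trans hkm hmn)
      push_cast [Nat.cast_sub this]
      ring
    have h2 : ((m.descFactorial k : ℕ) : ℝ) = ∏ i ∈ range k, ((m:ℝ) - i) := by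
      rw [Nat.descFactorial_eq_prod_range]
      rw [Nat.cast_prod]
      apply Finset.prod_congr rfl
      intro i hi
      have : i ≤ m := le_trans (le_of_lt (mem_range.1 hi)) hkm
      push_cast [Nat.cast_sub this]
      ring
    have hn' : (n.descFactorial k : ℝ) = (Nat.factorial k : ℝ) * n.choose k := by
      exact_mod_cast congrArg (Nat.cast (R := ℝ)) (Nat.descFactorial_eq_factorial_mul_choose n k)
    have hm' : (m.descFactorial k : ℝ) = (Nat.factorial k : ℝ) * m.choose k := by
      exact_mod_cast congrArg (Nat.cast (R := ℝ)) (Nat.descFactorial_eq_factorial_mul_choose m k)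
    rw [Finset.prod_div_distrib, ← h1, ← h2, hn', hm']
    rw [mul_div_mul_left]
    exact_mod_cast (Nat.factorial_pos k).ne'
  rw [hprod]
  -- lower bound each factor
  have key : ∀ i ∈ range k, (n:ℝ)/m * Real.exp (((n:ℝ) - m)/((n:ℝ)*m) * i)
      ≤ ((n:ℝ) - i) / ((m:ℝ) - i) := by
    intro i hi
    have hik : i < m := lt_of_lt_of_le (mem_range.1 hi) hkm
    exact aux_factor n m i (by positivity) (by exact_mod_cast hmn)
      (by exact_mod_cast Nat.succ_le_of_lt hik)
  have hsum : ∀ K : ℕ, ∑ i ∈ range K, (i:ℝ) = (K:ℝ) * ((K:ℝ) - 1) / 2 := by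
    intro K
    induction K with
    | zero => simp
    | succ j ih =>
      rw [Finset.sum_range_succ, ih]
      push_cast
      ring
  calc ((n:ℝ)/m)^k * Real.exp (((n:ℝ) - m)/((n:ℝ)*m) * ((k:ℝ)*((k:ℝ)-1)/2))
      = ∏ i ∈ range k, ((n:ℝ)/m * Real.exp (((n:ℝ) - m)/((n:ℝ)*m) * i)) := by
        rw [Finset.prod_mul_distrib, Finset.prod_const, ← Real.exp_sum,
          ← Finset.mul_sum, hsum k]
        simp [card_range]
    _ ≤ ∏ i ∈ range k, (((n:ℝ) - i) / ((m:ℝ) - i)) := by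
        apply Finset.prod_le_prod
        · intro i hi
          positivity
        · exact key
end

section
/- For integers n ≥ m ≥ k ≥ 0 with k ≤ m, C(n,k)/C(m,k) ≤ exp(n·H(k/n)) / exp(m·H(k/m)), where H is the binary entropy function. -/
open Real

private lemma aux_hasDerivAt {x : ℝ} (hx : 0 < x) :
    HasDerivAt (fun x : ℝ => x * (Real.log (x + 1) - Real.log x))
      (1 * (Real.log (x + 1) - Real.log x) + x * ((x + 1)⁻¹ - x⁻¹)) x := by
  have h1 : HasDerivAt (fun x : ℝ => Real.log (x + 1)) ((x + 1)⁻¹) x := by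
    have := (Real.hasDerivAt_log (by positivity : x + 1 ≠ 0)).comp x
      ((hasDerivAt_id x).add_const 1)
    rw [mul_one] at this
    exact this
  have h2 : HasDerivAt Real.log x⁻¹ x := Real.hasDerivAt_log hx.ne'
  exact (hasDerivAt_id x).mul (h1.sub h2)

private lemma aux_deriv_nonneg {x : ℝ} (hx : 0 < x) :
    0 ≤ 1 * (Real.log (x + 1) - Real.log x) + x * ((x + 1)⁻¹ - x⁻¹) := by
  have hx1 : (0:ℝ) < x + 1 := by linarith
  have hlog : Real.log (x / (x + 1)) ≤ x / (x + 1) - 1 :=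
    Real.log_le_sub_one_of_pos (by positivity)
  rw [Real.log_div hx.ne' hx1.ne'] at hlog
  have h1 : x / (x + 1) - 1 = -(1 / (x + 1)) := by field_simp; ring
  have h2 : x * ((x + 1)⁻¹ - x⁻¹) = x / (x + 1) - 1 := by field_simp
  rw [h1] at hlog
  rw [h2, h1]
  have : (1:ℝ) / (x + 1) ≤ Real.log (x + 1) - Real.log x := by linarith
  linarith

private lemma aux_mono {a b : ℝ} (ha : 0 < a) (hab : a ≤ b) :
    a * (Real.log (a + 1) - Real.log a) ≤ b * (Real.log (b + 1) - Real.log b) := by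
  have hmono : MonotoneOn (fun x : ℝ => x * (Real.log (x + 1) - Real.log x)) (Set.Ici a) := by
    apply monotoneOn_of_deriv_nonneg (convex_Ici a)
    · intro x hx
      have hx0 : 0 < x := lt_of_lt_of_le ha hx
      exact (aux_hasDerivAt hx0).continuousAt.continuousWithinAt
    · intro x hx
      rw [interior_Ici] at hx
      exact (aux_hasDerivAt (ha.trans hx)).differentiableAt.differentiableWithinAt
    · intro x hx
      rw [interior_Ici] at hx
      rw [(aux_hasDerivAt (ha.trans hx)).deriv]
      exact aux_deriv_nonneg (ha.trans hx)
  exact hmono Set.self_mem_Ici (Set.mem_Ici.2 hab) hab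

private lemma entropy_eq {k n : ℕ} (hk : 0 < k) (hkn : k < n) :
    (n : ℝ) * Real.binEntropy ((k : ℝ) / n) =
      (n : ℝ) * Real.log n - (k : ℝ) * Real.log k - ((n : ℝ) - k) * Real.log ((n : ℝ) - k) := by
  have hn : (0:ℝ) < n := by exact_mod_cast hk.trans hkn
  have hk' : (0:ℝ) < k := by exact_mod_cast hk
  have hnk : (0:ℝ) < (n : ℝ) - k := by
    have : (k:ℝ) < n := by exact_mod_cast hkn
    linarith
  rw [Real.binEntropy]
  have h1 : 1 - (k : ℝ) / n = ((n:ℝ) - k) / n := by field_simp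
  rw [h1, Real.log_inv, Real.log_inv, Real.log_div hk'.ne' hn.ne',
    Real.log_div hnk.ne' hn.ne']
  field_simp
  ring

private lemma step_lemma {k n : ℕ} (hk : 0 < k) (hkn : k < n) :
    ((n + 1).choose k : ℝ) * Real.exp ((n : ℝ) * Real.binEntropy ((k : ℝ) / n)) ≤
      (n.choose k : ℝ) * Real.exp (((n : ℝ) + 1) * Real.binEntropy ((k : ℝ) / ((n : ℝ) + 1))) := by
  have hn : (0:ℝ) < n := by exact_mod_cast hk.trans hkn
  have hkr : (0:ℝ) < k := by exact_mod_cast hk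
  have hknr : (k:ℝ) < n := by exact_mod_cast hkn
  have hnk : (0:ℝ) < (n:ℝ) - k := by linarith
  have hnk1 : (0:ℝ) < (n:ℝ) + 1 - k := by linarith
  -- key: ((n:ℝ)+1) * exp (n bE) ≤ ((n:ℝ)+1-k) * exp ((n+1) bE')
  have key : ((n:ℝ) + 1) * Real.exp ((n : ℝ) * Real.binEntropy ((k : ℝ) / n)) ≤
      ((n:ℝ) + 1 - k) *
        Real.exp (((n : ℝ) + 1) * Real.binEntropy ((k : ℝ) / ((n : ℝ) + 1))) := by
    have e1 : ((n:ℝ) + 1) * Real.exp ((n : ℝ) * Real.binEntropy ((k : ℝ) / n)) =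
        Real.exp (Real.log ((n:ℝ) + 1) + (n : ℝ) * Real.binEntropy ((k : ℝ) / n)) := by
      rw [Real.exp_add, Real.exp_log (by linarith)]
    have e2 : ((n:ℝ) + 1 - k) *
        Real.exp (((n : ℝ) + 1) * Real.binEntropy ((k : ℝ) / ((n : ℝ) + 1))) =
        Real.exp (Real.log ((n:ℝ) + 1 - k) +
          ((n : ℝ) + 1) * Real.binEntropy ((k : ℝ) / ((n : ℝ) + 1))) := by
      rw [Real.exp_add, Real.exp_log hnk1]
    rw [e1, e2]
    apply Real.exp_le_exp.2
    have hE1 := entropy_eq hk hkn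
    have hE2 := entropy_eq hk (hkn.trans (Nat.lt_succ_self n))
    have hcast : ((n + 1 : ℕ) : ℝ) = (n : ℝ) + 1 := by push_cast; ring
    rw [hcast] at hE2
    rw [hE1, hE2]
    have hmono := aux_mono hnk (by linarith : (n:ℝ) - k ≤ (n:ℝ))
    have h1 : (n:ℝ) - k + 1 = (n:ℝ) + 1 - k := by ring
    rw [h1] at hmono
    nlinarith [hmono]
  -- choose identity
  have hid : ((n + 1).choose k : ℝ) * ((n:ℝ) + 1 - k) = ((n:ℝ) + 1) * (n.choose k : ℝ) := by
    have := Nat.choose_mul_succ_eq n k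
    have hle : k ≤ n + 1 := by omega
    have : ((n.choose k * (n + 1) : ℕ) : ℝ) = (((n + 1).choose k * (n + 1 - k) : ℕ) : ℝ) :=
      congrArg (Nat.cast : ℕ → ℝ) this
    push_cast [Nat.cast_sub hle] at this
    linarith [this]
  -- multiply key by choose n k and divide by (n+1-k)
  have hC : (0:ℝ) < (n.choose k : ℝ) := by
    exact_mod_cast Nat.choose_pos (le_of_lt hkn)
  rw [← mul_le_mul_iff_of_pos_right hnk1]
  calc ((n + 1).choose k : ℝ) * Real.exp ((n : ℝ) * Real.binEntropy ((k : ℝ) / n)) *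
        ((n:ℝ) + 1 - k)
      = ((n:ℝ) + 1) * (n.choose k : ℝ) *
          Real.exp ((n : ℝ) * Real.binEntropy ((k : ℝ) / n)) := by
        rw [mul_right_comm, hid]
    _ = (n.choose k : ℝ) *
          (((n:ℝ) + 1) * Real.exp ((n : ℝ) * Real.binEntropy ((k : ℝ) / n))) := by ring
    _ ≤ (n.choose k : ℝ) *
          (((n:ℝ) + 1 - k) *
            Real.exp (((n : ℝ) + 1) * Real.binEntropy ((k : ℝ) / ((n : ℝ) + 1)))) :=
        mul_le_mul_of_nonneg_left key hC.le
    _ = (n.choose k : ℝ) *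
          Real.exp (((n : ℝ) + 1) * Real.binEntropy ((k : ℝ) / ((n : ℝ) + 1))) *
          ((n:ℝ) + 1 - k) := by ring

theorem binom_ratio_entropy_upper (n m k : ℕ) (hk : 0 < k) (hkm : k < m) (hmn : m < n) :
    (n.choose k : ℝ) / (m.choose k : ℝ)
      ≤ Real.exp ((n : ℝ) * Real.binEntropy ((k : ℝ) / n)) /
        Real.exp ((m : ℝ) * Real.binEntropy ((k : ℝ) / m)) := by
  have hCm : (0:ℝ) < (m.choose k : ℝ) := by
    exact_mod_cast Nat.choose_pos (le_of_lt hkm)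
  rw [div_le_div_iff₀ hCm (Real.exp_pos _)]
  -- induction
  have main : ∀ N : ℕ, m ≤ N →
      (N.choose k : ℝ) * Real.exp ((m : ℝ) * Real.binEntropy ((k : ℝ) / m)) ≤
        (m.choose k : ℝ) * Real.exp ((N : ℝ) * Real.binEntropy ((k : ℝ) / N)) := by
    intro N hN
    induction N, hN using Nat.le_induction with
    | base => exact le_rfl
    | succ N hN ih =>
      have hkN : k < N := lt_of_lt_of_le hkm hN
      have hstep := step_lemma hk hkN
      have hcast : ((N + 1 : ℕ) : ℝ) = (N : ℝ) + 1 := by push_cast; ring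
      rw [hcast]
      have hEpos : (0:ℝ) < Real.exp ((N : ℝ) * Real.binEntropy ((k : ℝ) / N)) :=
        Real.exp_pos _
      have h1 : ((N + 1).choose k : ℝ) *
          Real.exp ((m : ℝ) * Real.binEntropy ((k : ℝ) / m)) *
          Real.exp ((N : ℝ) * Real.binEntropy ((k : ℝ) / N)) ≤
          (m.choose k : ℝ) *
          Real.exp (((N : ℝ) + 1) * Real.binEntropy ((k : ℝ) / ((N : ℝ) + 1))) *
          Real.exp ((N : ℝ) * Real.binEntropy ((k : ℝ) / N)) := by
        calc ((N + 1).choose k : ℝ) *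
              Real.exp ((m : ℝ) * Real.binEntropy ((k : ℝ) / m)) *
              Real.exp ((N : ℝ) * Real.binEntropy ((k : ℝ) / N))
            = (((N + 1).choose k : ℝ) *
                Real.exp ((N : ℝ) * Real.binEntropy ((k : ℝ) / N))) *
                Real.exp ((m : ℝ) * Real.binEntropy ((k : ℝ) / m)) := by ring
          _ ≤ ((N.choose k : ℝ) *
                Real.exp (((N : ℝ) + 1) * Real.binEntropy ((k : ℝ) / ((N : ℝ) + 1)))) *
                Real.exp ((m : ℝ) * Real.binEntropy ((k : ℝ) / m)) :=
              mul_le_mul_of_nonneg_right hstep (Real.exp_pos _).le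
          _ = ((N.choose k : ℝ) *
                Real.exp ((m : ℝ) * Real.binEntropy ((k : ℝ) / m))) *
                Real.exp (((N : ℝ) + 1) * Real.binEntropy ((k : ℝ) / ((N : ℝ) + 1))) := by
              ring
          _ ≤ ((m.choose k : ℝ) *
                Real.exp ((N : ℝ) * Real.binEntropy ((k : ℝ) / N))) *
                Real.exp (((N : ℝ) + 1) * Real.binEntropy ((k : ℝ) / ((N : ℝ) + 1))) :=
              mul_le_mul_of_nonneg_right ih (Real.exp_pos _).le
          _ = (m.choose k : ℝ) *
                Real.exp (((N : ℝ) + 1) * Real.binEntropy ((k : ℝ) / ((N : ℝ) + 1))) *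
                Real.exp ((N : ℝ) * Real.binEntropy ((k : ℝ) / N)) := by ring
      exact le_of_mul_le_mul_right h1 hEpos
  exact (main n hmn.le).trans_eq (mul_comm _ _)
end

section
/- For integers n ≥ m ≥ k ≥ 0 with m ≥ 1, C(n,k)/C(m,k) ≤ (n/m)^k * exp(k²/m). -/
open Finset in
lemma sum_log_ge_aux (m : ℕ) : ∀ k, k ≤ m →
    (m : ℝ) * Real.log m - ((m : ℝ) - k) * Real.log ((m : ℝ) - k) - k
      ≤ ∑ i ∈ Finset.range k, Real.log ((m : ℝ) - i) := by
  intro k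
  induction k with
  | zero => simp
  | succ k ih =>
    intro hk
    have hk' : k ≤ m := Nat.le_of_succ_le hk
    have ih' := ih hk'
    set a : ℝ := (m : ℝ) - k with ha_def
    have ha : (1 : ℝ) ≤ a := by
      have : (k : ℝ) + 1 ≤ (m : ℝ) := by exact_mod_cast hk
      simp only [ha_def]; linarith
    have key : (a - 1) * (Real.log a - Real.log (a - 1)) ≤ 1 := by
      rcases eq_or_lt_of_le ha with h1 | h1
      · simp [← h1]
      · have hpos : (0 : ℝ) < a - 1 := by linarith
        have hdiv : Real.log a - Real.log (a - 1) = Real.log (a / (a - 1)) := by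
          rw [Real.log_div (by linarith) (by linarith)]
        have hlog : Real.log (a / (a - 1)) ≤ a / (a - 1) - 1 :=
          Real.log_le_sub_one_of_pos (by positivity)
        have : a / (a - 1) - 1 = 1 / (a - 1) := by field_simp; ring
        rw [hdiv]
        calc (a - 1) * Real.log (a / (a - 1)) ≤ (a - 1) * (1 / (a - 1)) := by
              nlinarith
          _ = 1 := by field_simp
    have hcast : ((m : ℝ) - (k + 1 : ℕ)) = a - 1 := by push_cast [ha_def]; ring
    rw [Finset.sum_range_succ]
    push_cast
    have h2 : (m : ℝ) - ((k : ℝ) + 1) = a - 1 := by simp only [ha_def]; ring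
    rw [h2]
    nlinarith [key, ih']

lemma pow_le_exp_mul_descFactorial (m k : ℕ) (hkm : k ≤ m) (hm : 1 ≤ m) :
    (m : ℝ) ^ k ≤ Real.exp ((k : ℝ) ^ 2 / m) * (m.descFactorial k : ℝ) := by
  have hm0 : (0 : ℝ) < m := by exact_mod_cast hm
  -- the product of (m - i) equals descFactorial
  have hprod : ∀ j, j ≤ m → (m.descFactorial j : ℝ) = ∏ i ∈ Finset.range j, ((m : ℝ) - i) := by
    intro j
    induction j with
    | zero => simp
    | succ j ih =>
      intro hj
      have hj' : j ≤ m := Nat.le_of_succ_le hj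
      rw [Nat.descFactorial_succ, Finset.prod_range_succ, ← ih hj']
      have : ((m - j : ℕ) : ℝ) = (m : ℝ) - j := by
        have := Nat.cast_sub hj' (R := ℝ); exact this
      push_cast [Nat.cast_sub hj']
      ring
  -- positivity of each factor
  have hfac : ∀ i ∈ Finset.range k, (0 : ℝ) < (m : ℝ) - i := by
    intro i hi
    have : i < m := lt_of_lt_of_le (Finset.mem_range.mp hi) hkm
    have : (i : ℝ) < m := by exact_mod_cast this
    linarith
  -- step 1: sum of logs bound
  have h1 := sum_log_ge_aux m k hkm
  -- step 2: k log m - k^2/m ≤ m log m - (m-k) log(m-k) - k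
  have h2 : (k : ℝ) * Real.log m - (k : ℝ) ^ 2 / m
      ≤ (m : ℝ) * Real.log m - ((m : ℝ) - k) * Real.log ((m : ℝ) - k) - k := by
    rcases eq_or_lt_of_le hkm with h | h
    · subst h
      have h0 : ((k : ℝ) - k) = 0 := sub_self _
      rw [h0, Real.log_zero, mul_zero]
      have hq : ((k : ℝ)) ^ 2 / k = k := by
        field_simp [pow_two]
      rw [hq]; linarith
    · have hmk : (0 : ℝ) < (m : ℝ) - k := by
        have : (k : ℝ) < m := by exact_mod_cast h
        linarith
      have hlog : Real.log (((m : ℝ) - k) / m) ≤ ((m : ℝ) - k) / m - 1 :=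
        Real.log_le_sub_one_of_pos (by positivity)
      have hd : Real.log (((m : ℝ) - k) / m) = Real.log ((m : ℝ) - k) - Real.log m := by
        rw [Real.log_div (by linarith) (by linarith)]
      rw [hd] at hlog
      have h3 : ((m : ℝ) - k) / m - 1 = -(k / m) := by field_simp; ring
      rw [h3] at hlog
      -- (m-k)(log m - log(m-k)) ≥ k(m-k)/m
      have h4 : (k : ℝ) * ((m : ℝ) - k) / m ≤ ((m : ℝ) - k) * (Real.log m - Real.log ((m : ℝ) - k)) := by
        have := mul_le_mul_of_nonneg_left (neg_le_neg hlog) (le_of_lt hmk)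
        calc (k : ℝ) * ((m : ℝ) - k) / m = ((m : ℝ) - k) * (k / m) := by ring
          _ ≤ ((m : ℝ) - k) * (Real.log m - Real.log ((m : ℝ) - k)) := by nlinarith
      have h5 : (k : ℝ) - (k : ℝ) ^ 2 / m = (k : ℝ) * ((m : ℝ) - k) / m := by field_simp
      nlinarith
  -- exponentiate
  have hsum : Real.exp (∑ i ∈ Finset.range k, Real.log ((m : ℝ) - i))
      = ∏ i ∈ Finset.range k, ((m : ℝ) - i) := by
    rw [Real.exp_sum]
    exact Finset.prod_congr rfl fun i hi => Real.exp_log (hfac i hi)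
  have hpowm : (m : ℝ) ^ k = Real.exp ((k : ℝ) * Real.log m) := by
    rw [← Real.log_pow, Real.exp_log (by positivity)]
  calc (m : ℝ) ^ k = Real.exp ((k : ℝ) * Real.log m) := hpowm
    _ ≤ Real.exp ((k : ℝ) ^ 2 / m + ∑ i ∈ Finset.range k, Real.log ((m : ℝ) - i)) := by
        apply Real.exp_le_exp.mpr; linarith
    _ = Real.exp ((k : ℝ) ^ 2 / m) * (m.descFactorial k : ℝ) := by
        rw [Real.exp_add, hsum, hprod k hkm]

theorem binom_ratio_upper (n m k : ℕ) (hmn : m ≤ n) (hkm : k ≤ m) (hm : 1 ≤ m) :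
    (n.choose k : ℝ) / (m.choose k : ℝ)
      ≤ ((n : ℝ) / m) ^ k * Real.exp ((k : ℝ) ^ 2 / m) := by
  have hm0 : (0 : ℝ) < m := by exact_mod_cast hm
  have hn0 : (0 : ℝ) < n := lt_of_lt_of_le hm0 (by exact_mod_cast hmn)
  have hchoose_pos : 0 < m.choose k := Nat.choose_pos hkm
  have hdesc_pos : 0 < m.descFactorial k := by
    rw [Nat.descFactorial_eq_factorial_mul_choose]
    exact Nat.mul_pos k.factorial_pos hchoose_pos
  have hdesc_posR : (0 : ℝ) < (m.descFactorial k : ℝ) := by exact_mod_cast hdesc_pos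
  have hratio : (n.choose k : ℝ) / (m.choose k : ℝ)
      = (n.descFactorial k : ℝ) / (m.descFactorial k : ℝ) := by
    rw [Nat.descFactorial_eq_factorial_mul_choose, Nat.descFactorial_eq_factorial_mul_choose]
    push_cast
    rw [mul_div_mul_left]
    positivity
  have hle : (n.descFactorial k : ℝ) ≤ (n : ℝ) ^ k := by
    exact_mod_cast Nat.descFactorial_le_pow n k
  have hkey := pow_le_exp_mul_descFactorial m k hkm hm
  rw [hratio, div_pow, div_le_iff₀ hdesc_posR]
  have hmain : (n : ℝ) ^ k * ((m : ℝ) ^ k)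
      ≤ (n : ℝ) ^ k * (Real.exp ((k : ℝ) ^ 2 / m) * (m.descFactorial k : ℝ)) :=
    mul_le_mul_of_nonneg_left hkey (by positivity)
  calc (n.descFactorial k : ℝ) ≤ (n : ℝ) ^ k := hle
    _ ≤ (n : ℝ) ^ k / (m : ℝ) ^ k * Real.exp ((k : ℝ) ^ 2 / m) * (m.descFactorial k : ℝ) := by
        rw [div_mul_eq_mul_div, div_mul_eq_mul_div, le_div_iff₀ (by positivity)]
        nlinarith [hmain]
end

section
/- For all x with 0 ≤ x ≤ 1, the binary entropy function satisfies H(x) ≤ log 2 - 2(1/2 - x)². -/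
open Real

/-- Auxiliary: `2t ≤ log(1+t) - log(1-t)` for `0 ≤ t < 1`. -/
lemma aux_two_mul_le_log (t : ℝ) (ht0 : 0 ≤ t) (ht1 : t < 1) :
    2 * t ≤ Real.log (1 + t) - Real.log (1 - t) := by
  set g : ℝ → ℝ := fun y => Real.log (1 + y) - Real.log (1 - y) - 2 * y with hg
  have key : ∀ y ∈ Set.Ioo (0 : ℝ) 1, HasDerivAt g (1 / (1 + y) + 1 / (1 - y) - 2) y := by
    intro y hy
    have h1 : (1 : ℝ) + y ≠ 0 := by nlinarith [hy.1]
    have h2 : (1 : ℝ) - y ≠ 0 := by nlinarith [hy.2]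
    have d1 : HasDerivAt (fun y : ℝ => Real.log (1 + y)) (1 / (1 + y)) y := by
      have := ((hasDerivAt_id y).const_add 1).log h1
      simpa using this
    have d2 : HasDerivAt (fun y : ℝ => Real.log (1 - y)) (-1 / (1 - y)) y := by
      have := ((hasDerivAt_id y).const_sub 1).log h2
      simpa using this
    have d3 : HasDerivAt (fun y : ℝ => 2 * y) 2 y := by
      simpa using (hasDerivAt_id y).const_mul 2
    have := (d1.sub d2).sub d3
    exact this.congr_deriv (by ring)
  have hmono : MonotoneOn g (Set.Icc 0 t) := by
    rcases eq_or_lt_of_le ht0 with h | h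
    · subst h
      intro a ha b hb hab
      simp only [Set.Icc_self, Set.mem_singleton_iff] at ha hb
      subst ha; subst hb; exact le_refl _
    apply monotoneOn_of_deriv_nonneg (convex_Icc 0 t)
    · apply ContinuousOn.sub (ContinuousOn.sub ?_ ?_) (by fun_prop)
      · apply ContinuousOn.log (by fun_prop)
        intro y hy
        simp only [Set.mem_Icc] at hy
        nlinarith [hy.1]
      · apply ContinuousOn.log (by fun_prop)
        intro y hy
        simp only [Set.mem_Icc] at hy
        nlinarith [hy.2]
    · intro y hy
      rw [interior_Icc] at hy
      exact ((key y ⟨hy.1, lt_of_lt_of_le hy.2 ht1.le⟩).differentiableAt).differentiableWithinAt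
    · intro y hy
      rw [interior_Icc] at hy
      have hy1 : y < 1 := lt_of_lt_of_le hy.2 ht1.le
      rw [(key y ⟨hy.1, hy1⟩).deriv]
      have hp : (0 : ℝ) < 1 + y := by linarith [hy.1]
      have hq : (0 : ℝ) < 1 - y := by linarith
      rw [div_add_div _ _ (ne_of_gt hp) (ne_of_gt hq)]
      rw [sub_nonneg, le_div_iff₀ (by positivity)]
      nlinarith [sq_nonneg y, hy.1]
  have h0mem : (0 : ℝ) ∈ Set.Icc (0 : ℝ) t := ⟨le_refl _, ht0⟩
  have htmem : t ∈ Set.Icc (0 : ℝ) t := ⟨ht0, le_refl _⟩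
  have := hmono h0mem htmem ht0
  simp only [hg] at this
  simp only [add_zero, sub_zero, mul_zero, Real.log_one] at this
  linarith

/-- Main bound on `[0, 1/2]` with `x > 0`. -/
lemma aux_half (x : ℝ) (h0 : 0 < x) (h1 : x ≤ 1 / 2) :
    Real.binEntropy x ≤ Real.log 2 - 2 * (1 / 2 - x) ^ 2 := by
  set f : ℝ → ℝ := fun y => Real.log 2 - 2 * (1 / 2 - y) ^ 2 - Real.binEntropy y with hf
  have key : ∀ y ∈ Set.Ioo (0 : ℝ) (1 / 2 : ℝ),
      HasDerivAt f (2 - 4 * y - (Real.log (1 - y) - Real.log y)) y := by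
    intro y hy
    have hb : HasDerivAt Real.binEntropy (Real.log (1 - y) - Real.log y) y :=
      Real.hasDerivAt_binEntropy (ne_of_gt hy.1) (by nlinarith [hy.2])
    have dq : HasDerivAt (fun y : ℝ => Real.log 2 - 2 * (1 / 2 - y) ^ 2) (2 - 4 * y) y := by
      have : HasDerivAt (fun y : ℝ => 2 * (1 / 2 - y) ^ 2) (2 * (2 * (1 / 2 - y) * (-1))) y := by
        exact (((hasDerivAt_id y).const_sub (1/2)).pow 2).const_mul 2 |>.congr_deriv (by simp only [id_eq]; ring)
      have := this.const_sub (Real.log 2)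
      exact this.congr_deriv (by ring)
    have := dq.sub hb
    exact this
  have hanti : AntitoneOn f (Set.Icc x (1 / 2 : ℝ)) := by
    rcases eq_or_lt_of_le h1 with h | h
    · subst h
      intro a ha b hb hab
      have : a = b := le_antisymm hab (hb.2.trans ha.1)
      subst this; exact le_refl _
    apply antitoneOn_of_deriv_nonpos (convex_Icc x (1 / 2))
    · apply ContinuousOn.sub (by fun_prop)
      exact Real.binEntropy_continuous.continuousOn
    · intro y hy
      rw [interior_Icc] at hy
      exact ((key y ⟨lt_trans h0 hy.1, hy.2⟩).differentiableAt).differentiableWithinAt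
    · intro y hy
      rw [interior_Icc] at hy
      have hy0 : 0 < y := lt_trans h0 hy.1
      rw [(key y ⟨hy0, hy.2⟩).deriv]
      have := aux_two_mul_le_log (1 - 2 * y) (by linarith [hy.2]) (by linarith)
      have he1 : (1 : ℝ) + (1 - 2 * y) = 2 * (1 - y) := by ring
      have he2 : (1 : ℝ) - (1 - 2 * y) = 2 * y := by ring
      rw [he1, he2, Real.log_mul (by norm_num) (by nlinarith [hy.2]),
        Real.log_mul (by norm_num) (ne_of_gt hy0)] at this
      linarith
  have hxm : x ∈ Set.Icc x (1 / 2 : ℝ) := ⟨le_refl _, h1⟩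
  have hhm : (1 / 2 : ℝ) ∈ Set.Icc x (1 / 2 : ℝ) := ⟨h1, le_refl _⟩
  have := hanti hxm hhm h1
  have hhalf : Real.binEntropy (1 / 2) = Real.log 2 := by
    rw [show (1 / 2 : ℝ) = 2⁻¹ by norm_num]; exact Real.binEntropy_two_inv
  simp only [hf, hhalf] at this
  nlinarith [this]

theorem binEntropy_le_log_two (x : ℝ) (h0 : 0 ≤ x) (h1 : x ≤ 1) :
    Real.binEntropy x ≤ Real.log 2 - 2 * (1 / 2 - x) ^ 2 := by
  have hlog2 : (0.6931 : ℝ) ≤ Real.log 2 := by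
    nlinarith [Real.log_two_gt_d9]
  rcases eq_or_lt_of_le h0 with h | hx0
  · subst h
    simp only [Real.binEntropy_zero]
    nlinarith
  rcases eq_or_lt_of_le h1 with h | hx1
  · subst h
    simp only [Real.binEntropy_one]
    nlinarith
  rcases le_or_gt x (1 / 2) with hle | hgt
  · exact aux_half x hx0 hle
  · have := aux_half (1 - x) (by linarith) (by linarith)
    rw [Real.binEntropy_one_sub] at this
    calc Real.binEntropy x ≤ Real.log 2 - 2 * (1 / 2 - (1 - x)) ^ 2 := this
      _ = Real.log 2 - 2 * (1 / 2 - x) ^ 2 := by ring_nf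
end

section
/- For all x with 0 ≤ x ≤ 1, the binary entropy function satisfies H(x) ≥ log 2 - 2(1/2 - x)² - 4(1/2 - x)⁴. -/
open Real

private lemma log1p_le_aux (u : ℝ) (hu : 0 ≤ u) :
    Real.log (1 + u) ≤ u - u ^ 2 / 2 + u ^ 3 / 3 - u ^ 4 / 4 + u ^ 5 / 5 := by
  set F : ℝ → ℝ := fun t => t - t ^ 2 / 2 + t ^ 3 / 3 - t ^ 4 / 4 + t ^ 5 / 5 - Real.log (1 + t)
    with hFdef
  have hd : ∀ t : ℝ, 0 ≤ t → HasDerivAt F (t ^ 5 / (1 + t)) t := by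
    intro t ht
    have h1 : (0 : ℝ) < 1 + t := by linarith
    have hlog : HasDerivAt (fun s : ℝ => Real.log (1 + s)) (1 / (1 + t)) t := by
      have := (Real.hasDerivAt_log (ne_of_gt h1)).comp t ((hasDerivAt_id t).const_add 1)
      simpa [Function.comp_def] using this
    have hpoly : HasDerivAt (fun s : ℝ => s - s ^ 2 / 2 + s ^ 3 / 3 - s ^ 4 / 4 + s ^ 5 / 5)
        (1 - t + t ^ 2 - t ^ 3 + t ^ 4) t := by
      have h2 := (hasDerivAt_pow 2 t).div_const 2
      have h3 := (hasDerivAt_pow 3 t).div_const 3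
      have h4 := (hasDerivAt_pow 4 t).div_const 4
      have h5 := (hasDerivAt_pow 5 t).div_const 5
      have := ((((hasDerivAt_id t).sub h2).add h3).sub h4).add h5
      refine this.congr_deriv ?_
      push_cast
      ring
    have := hpoly.sub hlog
    refine this.congr_deriv ?_
    field_simp
    ring
  have mono : MonotoneOn F (Set.Ici (0 : ℝ)) := by
    apply monotoneOn_of_deriv_nonneg (convex_Ici 0)
    · intro t ht
      exact (hd t ht).continuousAt.continuousWithinAt
    · intro t ht
      rw [interior_Ici] at ht
      exact ((hd t (le_of_lt ht)).differentiableAt).differentiableWithinAt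
    · intro t ht
      rw [interior_Ici] at ht
      rw [(hd t (le_of_lt ht)).deriv]
      have ht' : (0:ℝ) < t := ht
      exact div_nonneg (pow_nonneg ht'.le 5) (by linarith)
  have h0 : F 0 = 0 := by simp [hFdef]
  have := mono (Set.mem_Ici.2 le_rfl) (Set.mem_Ici.2 hu) hu
  rw [h0] at this
  simp only [hFdef] at this
  linarith

private lemma log1m_le_aux (u : ℝ) (hu : 0 ≤ u) (hu1 : u < 1) :
    Real.log (1 - u) ≤ -(u + u ^ 2 / 2 + u ^ 3 / 3 + u ^ 4 / 4 + u ^ 5 / 5 + u ^ 6 / 6) := by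
  set F : ℝ → ℝ := fun t =>
      -(t + t ^ 2 / 2 + t ^ 3 / 3 + t ^ 4 / 4 + t ^ 5 / 5 + t ^ 6 / 6) - Real.log (1 - t)
    with hFdef
  have hd : ∀ t : ℝ, 0 ≤ t → t < 1 → HasDerivAt F (t ^ 6 / (1 - t)) t := by
    intro t ht ht1
    have h1 : (0 : ℝ) < 1 - t := by linarith
    have hlog : HasDerivAt (fun s : ℝ => Real.log (1 - s)) (-(1 / (1 - t))) t := by
      have hbase : HasDerivAt (fun s : ℝ => 1 - s) (-1 : ℝ) t := by
        simpa using ((hasDerivAt_id t).const_sub 1)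
      have := (Real.hasDerivAt_log (ne_of_gt h1)).comp t hbase
      refine this.congr_deriv ?_
      field_simp
    have hpoly : HasDerivAt
        (fun s : ℝ => -(s + s ^ 2 / 2 + s ^ 3 / 3 + s ^ 4 / 4 + s ^ 5 / 5 + s ^ 6 / 6))
        (-(1 + t + t ^ 2 + t ^ 3 + t ^ 4 + t ^ 5)) t := by
      have h2 := (hasDerivAt_pow 2 t).div_const 2
      have h3 := (hasDerivAt_pow 3 t).div_const 3
      have h4 := (hasDerivAt_pow 4 t).div_const 4
      have h5 := (hasDerivAt_pow 5 t).div_const 5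
      have h6 := (hasDerivAt_pow 6 t).div_const 6
      have := ((((((hasDerivAt_id t).add h2).add h3).add h4).add h5).add h6).neg
      refine this.congr_deriv ?_
      push_cast
      ring
    have := hpoly.sub hlog
    refine this.congr_deriv ?_
    field_simp
    ring
  have mono : MonotoneOn F (Set.Ico (0 : ℝ) 1) := by
    apply monotoneOn_of_deriv_nonneg (convex_Ico 0 1)
    · intro t ht
      exact (hd t ht.1 ht.2).continuousAt.continuousWithinAt
    · intro t ht
      rw [interior_Ico] at ht
      exact ((hd t (le_of_lt ht.1) ht.2).differentiableAt).differentiableWithinAt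
    · intro t ht
      rw [interior_Ico] at ht
      rw [(hd t (le_of_lt ht.1) ht.2).deriv]
      exact div_nonneg (pow_nonneg ht.1.le 6) (by linarith [ht.2])
  have h0 : F 0 = 0 := by simp [hFdef]
  have := mono (Set.mem_Ico.2 ⟨le_rfl, one_pos⟩) (Set.mem_Ico.2 ⟨hu, hu1⟩) hu
  rw [h0] at this
  simp only [hFdef] at this
  linarith

private lemma g_le_aux (u : ℝ) (hu0 : 0 ≤ u) (hu1 : u ≤ 1) :
    (1 + u) * Real.log (1 + u) + (1 - u) * Real.log (1 - u) ≤ u ^ 2 + u ^ 4 / 2 := by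
  rcases eq_or_lt_of_le hu1 with rfl | hu1'
  · norm_num
    nlinarith [Real.log_two_lt_d9]
  · rcases le_or_gt u (9 / 10) with hc | hc
    · have l1 := log1p_le_aux u hu0
      have l2 := log1m_le_aux u hu0 hu1'
      have m1 : (1 + u) * Real.log (1 + u) ≤
          (1 + u) * (u - u ^ 2 / 2 + u ^ 3 / 3 - u ^ 4 / 4 + u ^ 5 / 5) :=
        mul_le_mul_of_nonneg_left l1 (by linarith)
      have m2 : (1 - u) * Real.log (1 - u) ≤
          (1 - u) * (-(u + u ^ 2 / 2 + u ^ 3 / 3 + u ^ 4 / 4 + u ^ 5 / 5 + u ^ 6 / 6)) :=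
        mul_le_mul_of_nonneg_left l2 (by linarith)
      nlinarith [mul_nonneg (pow_nonneg hu0 4) (sub_nonneg.2 hc),
        mul_nonneg (mul_nonneg (pow_nonneg hu0 4) (sub_nonneg.2 hc)) (sub_nonneg.2 hc),
        mul_nonneg (mul_nonneg (mul_nonneg (pow_nonneg hu0 4) (sub_nonneg.2 hc)) (sub_nonneg.2 hc)) (sub_nonneg.2 hc),
        pow_nonneg hu0 4, pow_nonneg hu0 6]
    · have hA : Real.log (1 + u) ≤ Real.log 2 + (u - 1) / 2 := by
        have h := Real.log_le_sub_one_of_pos (show (0 : ℝ) < (1 + u) / 2 by linarith)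
        rw [Real.log_div (by linarith) two_ne_zero] at h
        linarith
      have hB : Real.log (1 - u) ≤ -(8 / 5) := by
        have h10 : Real.log (1 - u) ≤ Real.log (1 / 10) :=
          Real.log_le_log (by linarith) (by linarith)
        have h8 : Real.log 8 ≤ Real.log 10 := Real.log_le_log (by norm_num) (by norm_num)
        have h8e : Real.log 8 = 3 * Real.log 2 := by
          rw [show (8 : ℝ) = 2 ^ 3 by norm_num, Real.log_pow]
          push_cast; ring
        have hinv : Real.log (1 / 10) = -Real.log 10 := by
          rw [one_div, Real.log_inv]
        have := Real.log_two_gt_d9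
        linarith
      have m1 : (1 + u) * Real.log (1 + u) ≤ (1 + u) * (Real.log 2 + (u - 1) / 2) :=
        mul_le_mul_of_nonneg_left hA (by linarith)
      have m2 : (1 - u) * Real.log (1 - u) ≤ (1 - u) * (-(8 / 5)) :=
        mul_le_mul_of_nonneg_left hB (by linarith)
      nlinarith [Real.log_two_lt_d9, sq_nonneg (u - 1), sq_nonneg (u - 9 / 10),
        mul_nonneg (sub_nonneg.2 hc.le) (sub_nonneg.2 hu1'.le),
        mul_nonneg (mul_nonneg (sub_nonneg.2 hc.le) (sub_nonneg.2 hu1'.le)) (sub_nonneg.2 hu1'.le)]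

private lemma main_aux (x : ℝ) (h0 : 0 < x) (h1 : x ≤ 1 / 2) :
    Real.log 2 - 2 * (1 / 2 - x) ^ 2 - 4 * (1 / 2 - x) ^ 4 ≤ Real.binEntropy x := by
  set u : ℝ := 1 - 2 * x with hu
  have hu0 : 0 ≤ u := by simp [hu]; linarith
  have hu1 : u ≤ 1 := by simp [hu]; linarith
  have key := g_le_aux u hu0 hu1
  have e1 : Real.log (1 + u) = Real.log 2 + Real.log (1 - x) := by
    rw [show (1 + u) = 2 * (1 - x) by rw [hu]; ring,
      Real.log_mul two_ne_zero (by linarith)]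
  have e2 : Real.log (1 - u) = Real.log 2 + Real.log x := by
    rw [show (1 - u) = 2 * x by rw [hu]; ring, Real.log_mul two_ne_zero (ne_of_gt h0)]
  rw [e1, e2] at key
  rw [Real.binEntropy, Real.log_inv, Real.log_inv]
  have hsq : (1 / 2 - x) ^ 2 = u ^ 2 / 4 := by rw [hu]; ring
  have hq : (1 / 2 - x) ^ 4 = u ^ 4 / 16 := by rw [hu]; ring
  rw [hsq, hq]
  have hux : (1 : ℝ) - u = 2 * x := by rw [hu]; ring
  have hux2 : (1 : ℝ) + u = 2 * (1 - x) := by rw [hu]; ring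
  nlinarith [key]

theorem binEntropy_ge (x : ℝ) (h0 : 0 ≤ x) (h1 : x ≤ 1) :
    Real.log 2 - 2 * (1 / 2 - x) ^ 2 - 4 * (1 / 2 - x) ^ 4 ≤ Real.binEntropy x := by
  rcases le_or_gt x (1 / 2) with hx | hx
  · rcases eq_or_lt_of_le h0 with rfl | h0'
    · rw [Real.binEntropy_zero]
      nlinarith [Real.log_two_lt_d9]
    · exact main_aux x h0' hx
  · have h1' : 1 - x ≤ 1 / 2 := by linarith
    rcases eq_or_lt_of_le h1 with rfl | hlt
    · rw [Real.binEntropy_one]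
      nlinarith [Real.log_two_lt_d9]
    · have := main_aux (1 - x) (by linarith) h1'
      rw [Real.binEntropy_one_sub] at this
      have e : (1 / 2 - (1 - x)) ^ 2 = (1 / 2 - x) ^ 2 := by ring
      have e4 : (1 / 2 - (1 - x)) ^ 4 = (1 / 2 - x) ^ 4 := by ring
      rw [e, e4] at this
      exact this
end

section
/- A Turán (n,k,r)-system of size at most (C(n,r)/C(k,r))·(1 + log C(n,k)) exists, obtainable by random sampling of r-sets. -/
open Finset

private lemma turan_avg (n k r : ℕ) (hrk : r ≤ k) (hkn : k ≤ n)
    (U : Finset (Finset (Fin n))) (hU : ∀ K ∈ U, K.card = k) (hne : U.Nonempty) :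
    ∃ R : Finset (Fin n), R.card = r ∧
      (k.choose r : ℝ) / (n.choose r : ℝ) * U.card
        ≤ ((U.filter (fun K => R ⊆ K)).card : ℝ) := by
  classical
  set S : Finset (Finset (Fin n)) := Finset.powersetCard r (univ : Finset (Fin n)) with hS
  have hcardS : S.card = n.choose r := by
    simp [hS, Finset.card_powersetCard]
  have hSne : S.Nonempty := by
    rw [← Finset.card_pos, hcardS]
    exact Nat.choose_pos (hrk.trans hkn)
  have hswap : ∑ R ∈ S, ((U.filter (fun K => R ⊆ K)).card : ℝ)
      = (U.card : ℝ) * (k.choose r : ℝ) := by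
    have key : ∑ R ∈ S, (U.filter (fun K => R ⊆ K)).card
        = ∑ K ∈ U, (S.filter (fun R => R ⊆ K)).card := by
      simp only [Finset.card_filter]
      rw [Finset.sum_comm]
    have inner : ∀ K ∈ U, (S.filter (fun R => R ⊆ K)).card = k.choose r := by
      intro K hK
      have : S.filter (fun R => R ⊆ K) = Finset.powersetCard r K := by
        ext R
        simp [hS, Finset.mem_powersetCard, Finset.mem_filter, and_comm]
      rw [this, Finset.card_powersetCard, hU K hK]
    have keyN : ∑ R ∈ S, (U.filter (fun K => R ⊆ K)).card = U.card * k.choose r := by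
      rw [key, Finset.sum_congr rfl inner, Finset.sum_const, smul_eq_mul]
    exact_mod_cast congrArg (fun m : ℕ => (m : ℝ)) keyN
  have hnr : (0:ℝ) < (n.choose r : ℝ) := by
    exact_mod_cast Nat.choose_pos (hrk.trans hkn)
  have hconst : ∑ _R ∈ S, ((k.choose r : ℝ) / (n.choose r : ℝ) * U.card)
      = (U.card : ℝ) * (k.choose r : ℝ) := by
    rw [Finset.sum_const, hcardS, nsmul_eq_mul]
    field_simp
  have hsums : ∑ _R ∈ S, ((k.choose r : ℝ) / (n.choose r : ℝ) * U.card)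
      ≤ ∑ R ∈ S, ((U.filter (fun K => R ⊆ K)).card : ℝ) := by rw [hconst, hswap]
  obtain ⟨R, hR, hle⟩ := Finset.exists_le_of_sum_le hSne hsums
  refine ⟨R, ?_, hle⟩
  exact (Finset.mem_powersetCard.mp hR).2

private lemma turan_cover (n k r : ℕ) (hr : 1 ≤ r) (hrk : r ≤ k) (hkn : k ≤ n) :
    ∀ t : ℕ, ∀ U : Finset (Finset (Fin n)), (∀ K ∈ U, K.card = k) →
    (U.card : ℝ) * (1 - (k.choose r : ℝ) / (n.choose r : ℝ)) ^ t < 1 →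
    ∃ T : Finset (Finset (Fin n)), (∀ R ∈ T, R.card = r) ∧
      (∀ K ∈ U, ∃ R ∈ T, R ⊆ K) ∧ T.card ≤ t := by
  classical
  set p : ℝ := (k.choose r : ℝ) / (n.choose r : ℝ) with hp
  have hp0 : 0 < p := by
    apply div_pos <;> exact_mod_cast Nat.choose_pos (by omega)
  have hp1 : p ≤ 1 := by
    rw [hp, div_le_one (by exact_mod_cast Nat.choose_pos (hrk.trans hkn))]
    exact_mod_cast Nat.choose_le_choose r hkn
  have h1p : 0 ≤ 1 - p := by linarith
  intro t
  induction t with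
  | zero =>
    intro U hU hlt
    simp only [pow_zero, mul_one] at hlt
    have : U.card = 0 := by exact_mod_cast Nat.lt_one_iff.mp (by exact_mod_cast hlt)
    refine ⟨∅, by simp, ?_, by simp⟩
    intro K hK
    simp [Finset.card_eq_zero.mp this] at hK
  | succ t ih =>
    intro U hU hlt
    rcases U.eq_empty_or_nonempty with rfl | hne
    · exact ⟨∅, by simp, by simp, by simp⟩
    obtain ⟨R, hRcard, hRavg⟩ := turan_avg n k r hrk hkn U hU hne
    set U' := U.filter (fun K => ¬ R ⊆ K) with hU'
    have hsplit : (U.filter (fun K => R ⊆ K)).card + U'.card = U.card := by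
      rw [hU']
      exact Finset.card_filter_add_card_filter_not _
    have hU'le : (U'.card : ℝ) ≤ (1 - p) * U.card := by
      have : (U'.card : ℝ) = U.card - (U.filter (fun K => R ⊆ K)).card := by
        push_cast [← hsplit]; ring
      rw [this]
      nlinarith [hRavg]
    have hU'lt : (U'.card : ℝ) * (1 - p) ^ t < 1 := by
      calc (U'.card : ℝ) * (1 - p) ^ t
          ≤ ((1 - p) * U.card) * (1 - p) ^ t :=
            mul_le_mul_of_nonneg_right hU'le (pow_nonneg h1p t)
        _ = (U.card : ℝ) * (1 - p) ^ (t + 1) := by ring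
        _ < 1 := hlt
    obtain ⟨T', hT'1, hT'2, hT'3⟩ := ih U' (fun K hK => hU K (Finset.mem_filter.mp hK).1) hU'lt
    refine ⟨insert R T', ?_, ?_, ?_⟩
    · intro Q hQ
      rcases Finset.mem_insert.mp hQ with rfl | hQ
      · exact hRcard
      · exact hT'1 Q hQ
    · intro K hK
      by_cases hRK : R ⊆ K
      · exact ⟨R, Finset.mem_insert_self _ _, hRK⟩
      · obtain ⟨Q, hQ1, hQ2⟩ := hT'2 K (Finset.mem_filter.mpr ⟨hK, hRK⟩)
        exact ⟨Q, Finset.mem_insert_of_mem hQ1, hQ2⟩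
    · calc (insert R T').card ≤ T'.card + 1 := Finset.card_insert_le _ _
        _ ≤ t + 1 := by omega

theorem turan_random_sampling (n k r : ℕ) (hr : 1 ≤ r) (hrk : r ≤ k) (hkn : k ≤ n) :
    ∃ T : Finset (Finset (Fin n)),
      (∀ R ∈ T, R.card = r) ∧
      (∀ K : Finset (Fin n), K.card = k → ∃ R ∈ T, R ⊆ K) ∧
      (T.card : ℝ) ≤ (n.choose r : ℝ) / (k.choose r : ℝ) * (1 + Real.log (n.choose k)) := by
  classical
  set p : ℝ := (k.choose r : ℝ) / (n.choose r : ℝ) with hp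
  have hp0 : 0 < p := by
    apply div_pos <;> exact_mod_cast Nat.choose_pos (by omega)
  have hp1 : p ≤ 1 := by
    rw [hp, div_le_one (by exact_mod_cast Nat.choose_pos (hrk.trans hkn))]
    exact_mod_cast Nat.choose_le_choose r hkn
  set N : ℝ := (n.choose k : ℝ) with hN
  have hN1 : (1:ℝ) ≤ N := by
    rw [hN]
    exact_mod_cast Nat.one_le_iff_ne_zero.mpr (Nat.choose_pos hkn).ne'
  have hlogN : 0 ≤ Real.log N := Real.log_nonneg hN1
  set t : ℕ := max 1 ⌈Real.log N / p⌉₊ with ht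
  -- key smallness
  have hpt : Real.log N ≤ p * t := by
    have h1 : Real.log N / p ≤ (⌈Real.log N / p⌉₊ : ℝ) := Nat.le_ceil _
    have h2 : (⌈Real.log N / p⌉₊ : ℝ) ≤ (t : ℝ) := by
      exact_mod_cast Nat.le_max_right 1 _
    rw [← div_le_iff₀' hp0]
    linarith
  have hsmall : N * (1 - p) ^ t < 1 := by
    have hstep : 1 - p < Real.exp (-p) := by
      have := Real.add_one_lt_exp (x := -p) (by linarith)
      linarith
    have ht1 : t ≠ 0 := by positivity
    have hpowlt : (1 - p) ^ t < Real.exp (-p) ^ t :=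
      pow_lt_pow_left₀ hstep (by linarith) ht1
    have hexp : Real.exp (-p) ^ t = Real.exp (-(p * t)) := by
      rw [← Real.exp_nat_mul]; ring_nf
    have hexple : Real.exp (-(p * t)) ≤ 1 / N := by
      rw [le_div_iff₀ (by linarith), ← Real.exp_log (x := N) (by linarith)]
      rw [← Real.exp_add]
      have : -(p * t) + Real.log N ≤ 0 := by linarith
      calc Real.exp (-(p * t) + Real.log N) ≤ Real.exp 0 := Real.exp_le_exp.mpr this
        _ = 1 := Real.exp_zero
    calc N * (1 - p) ^ t < N * Real.exp (-p) ^ t :=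
          (mul_lt_mul_iff_right₀ (by linarith)).mpr hpowlt
      _ = N * Real.exp (-(p * t)) := by rw [hexp]
      _ ≤ N * (1 / N) := by
          exact mul_le_mul_of_nonneg_left hexple (by linarith)
      _ = 1 := by field_simp
  -- the universe of k-sets
  set U : Finset (Finset (Fin n)) := Finset.powersetCard k (univ : Finset (Fin n)) with hU
  have hUcard : (U.card : ℝ) = N := by
    simp [hU, hN, Finset.card_powersetCard]
  obtain ⟨T, hT1, hT2, hT3⟩ := turan_cover n k r hr hrk hkn t U
    (fun K hK => (Finset.mem_powersetCard.mp hK).2) (by rw [hUcard]; exact hsmall)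
  refine ⟨T, hT1, ?_, ?_⟩
  · intro K hK
    exact hT2 K (Finset.mem_powersetCard.mpr ⟨Finset.subset_univ _, hK⟩)
  · have htle : (t : ℝ) ≤ (1 + Real.log N) / p := by
      have hA : (1:ℝ) ≤ (1 + Real.log N) / p := by
        rw [le_div_iff₀ hp0]; linarith
      have hB : (⌈Real.log N / p⌉₊ : ℝ) ≤ (1 + Real.log N) / p := by
        have hc : (⌈Real.log N / p⌉₊ : ℝ) < Real.log N / p + 1 :=
          Nat.ceil_lt_add_one (by positivity)
        have : Real.log N / p + 1 ≤ (1 + Real.log N) / p := by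
          rw [div_add' _ _ _ hp0.ne', div_le_div_iff_of_pos_right hp0]
          linarith
        linarith
      have : (t : ℝ) = max 1 (⌈Real.log N / p⌉₊ : ℝ) := by
        rw [ht]; push_cast [Nat.cast_max]; rfl
      rw [this]
      exact max_le hA hB
    have hinv : (1 + Real.log N) / p = (n.choose r : ℝ) / (k.choose r : ℝ) * (1 + Real.log N) := by
      rw [hp]
      field_simp
    calc (T.card : ℝ) ≤ (t : ℝ) := by exact_mod_cast hT3
      _ ≤ (1 + Real.log N) / p := htle
      _ = _ := hinv
end

section
/- For two points x, y ∈ {0,1}^d at Hamming distance r < d/2, and t = d/2 - s√d/2 with 1 ≤ s ≤ d^{1/4}/2, the number I of points z with dist(z,x) ≤ t and dist(z,y) ≤ t satisfies I·2^{-d} ≤ exp(-s²/(2(1-r/d))). -/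
open Finset Real

theorem hamming_ball_intersection_upper (d r : ℕ) (hd : 0 < d)
    (x y : Fin d → Bool) (hxy : hammingDist x y = r) (hr : (r : ℝ) < (d : ℝ) / 2)
    (s : ℝ) (hs1 : 1 ≤ s) (hs2 : s ≤ (d : ℝ) ^ ((1 : ℝ) / 4) / 2) :
    ((Finset.univ.filter
        (fun z : Fin d → Bool =>
          (hammingDist z x : ℝ) ≤ (d : ℝ) / 2 - s * Real.sqrt d / 2 ∧
          (hammingDist z y : ℝ) ≤ (d : ℝ) / 2 - s * Real.sqrt d / 2)).card : ℝ)
        * 2 ^ (-(d : ℝ))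
      ≤ Real.exp (-s ^ 2 / (2 * (1 - (r : ℝ) / d))) := by
  classical
  have hdR : (0:ℝ) < d := by exact_mod_cast hd
  have hrd : (r:ℝ) < d := lt_of_lt_of_le hr (by linarith)
  have hrle : r ≤ d := by exact_mod_cast hrd.le
  have hmR : (0:ℝ) < (d:ℝ) - r := by linarith
  set g : (Fin d → Bool) → ℕ := fun z => #{i | x i = y i ∧ z i ≠ x i} with hg
  have key : ∀ z : Fin d → Bool, hammingDist z x + hammingDist z y = r + 2 * g z := by
    intro z
    have : ∀ i : Fin d,
        ((if z i ≠ x i then 1 else 0) + (if z i ≠ y i then 1 else 0) : ℕ)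
        = (if x i ≠ y i then 1 else 0) + 2 * (if x i = y i ∧ z i ≠ x i then 1 else 0) := by
      intro i
      cases hzx : z i <;> cases hx : x i <;> cases hy : y i <;> simp
    simp only [hammingDist, hg, ← hxy, Finset.card_filter]
    rw [← Finset.sum_add_distrib, Finset.mul_sum, ← Finset.sum_add_distrib]
    exact Finset.sum_congr rfl fun i _ => this i
  set a : ℝ := s * Real.sqrt d / 2 with ha
  set L : ℝ := 2 * s * Real.sqrt d / ((d:ℝ) - r) with hL
  have hsqd : (0:ℝ) < Real.sqrt d := Real.sqrt_pos.2 hdR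
  have hLpos : 0 < L := div_pos (by positivity) hmR
  set C : ℝ := ((d:ℝ) - r) / 2 - a with hC
  set A := (Finset.univ.filter
        (fun z : Fin d → Bool =>
          (hammingDist z x : ℝ) ≤ (d : ℝ) / 2 - s * Real.sqrt d / 2 ∧
          (hammingDist z y : ℝ) ≤ (d : ℝ) / 2 - s * Real.sqrt d / 2)) with hA
  -- Chernoff step
  have step1 : (A.card : ℝ) ≤ ∑ z : Fin d → Bool, Real.exp (L * (C - g z)) := by
    rw [← Finset.sum_boole]
    push_cast
    apply Finset.sum_le_sum
    intro z _
    by_cases hz : z ∈ A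
    · simp only [hA, Finset.mem_filter] at hz
      have hgz : (g z : ℝ) ≤ C := by
        have h2 : ((hammingDist z x : ℕ) : ℝ) + (hammingDist z y : ℝ) = r + 2 * g z := by
          exact_mod_cast key z
        rw [hC, ha]; nlinarith [hz.2.1, hz.2.2]
      rw [if_pos hz.2]
      have : 0 ≤ L * (C - g z) := mul_nonneg hLpos.le (by linarith)
      calc (1:ℝ) = Real.exp 0 := by simp
        _ ≤ _ := Real.exp_le_exp.2 this
    · simp only [hA, Finset.mem_filter, Finset.mem_univ, true_and] at hz
      rw [if_neg hz]
      positivity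
  have hcards : #{i : Fin d | x i = y i} = d - r := by
    have h1 := Finset.card_filter_add_card_filter_not
      (s := (Finset.univ : Finset (Fin d))) (p := fun i => x i = y i)
    simp only [Finset.card_univ, Fintype.card_fin] at h1
    have hr' : #{i : Fin d | ¬ (x i = y i)} = r := by rw [← hxy]; rfl
    omega
  have step3 : ∑ z : Fin d → Bool, Real.exp (-L * g z)
      = (1 + Real.exp (-L)) ^ (d - r) * 2 ^ r := by
    have hpt : ∀ z : Fin d → Bool, Real.exp (-L * g z)
        = ∏ i : Fin d, Real.exp (-L * (if x i = y i ∧ z i ≠ x i then (1:ℝ) else 0)) := by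
      intro z
      rw [← Real.exp_sum]
      congr 1
      rw [hg]
      simp only [Finset.card_filter]
      push_cast
      rw [Finset.mul_sum]
    calc ∑ z : Fin d → Bool, Real.exp (-L * g z)
        = ∑ z : Fin d → Bool, ∏ i : Fin d,
            Real.exp (-L * (if x i = y i ∧ z i ≠ x i then (1:ℝ) else 0)) :=
          Finset.sum_congr rfl fun z _ => hpt z
      _ = ∏ i : Fin d, ∑ b : Bool, Real.exp (-L * (if x i = y i ∧ b ≠ x i then (1:ℝ) else 0)) := by
          rw [Finset.prod_univ_sum, Fintype.piFinset_univ]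
      _ = ∏ i : Fin d, (if x i = y i then 1 + Real.exp (-L) else 2) := by
          apply Finset.prod_congr rfl
          intro i _
          by_cases hxyi : x i = y i
          · rw [if_pos hxyi]
            have hyx : y i = x i := hxyi.symm
            cases hx : x i <;>
              simp [Fintype.sum_bool, hxyi, hx, hyx.trans hx, Real.exp_zero] <;> try ring
          · rw [if_neg hxyi]
            simp [Fintype.sum_bool, hxyi, Real.exp_zero]
      _ = (1 + Real.exp (-L)) ^ (d - r) * 2 ^ r := by
          rw [Finset.prod_ite, Finset.prod_const, Finset.prod_const, hcards]
          congr 2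
  have hmnat : ((d - r : ℕ) : ℝ) = (d:ℝ) - r := by push_cast [hrle]; ring
  have step2 : (A.card : ℝ) ≤ Real.exp (L * C) * ((1 + Real.exp (-L)) ^ (d - r) * 2 ^ r) := by
    refine step1.trans_eq ?_
    rw [← step3, Finset.mul_sum]
    apply Finset.sum_congr rfl
    intro z _
    rw [← Real.exp_add]
    congr 1
    ring
  -- arithmetic finish
  have h2d : (2:ℝ) ^ (-(d:ℝ)) = ((2:ℝ) ^ d)⁻¹ := by
    rw [Real.rpow_neg (by norm_num), Real.rpow_natCast]
  have hdsplit : (2:ℝ) ^ d = 2 ^ r * 2 ^ (d - r) := by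
    rw [← pow_add]; congr 1; omega
  have hcosh' : (1 + Real.exp (-L)) / 2 = Real.exp (-L/2) * Real.cosh (L/2) := by
    rw [Real.cosh_eq]
    have h1 : Real.exp (-L/2) * Real.exp (L/2) = 1 := by
      rw [← Real.exp_add, show -L/2 + L/2 = 0 by ring, Real.exp_zero]
    have h2 : Real.exp (-L/2) * Real.exp (-L/2) = Real.exp (-L) := by
      rw [← Real.exp_add]; ring_nf
    calc (1 + Real.exp (-L)) / 2
        = (Real.exp (-L/2) * Real.exp (L/2) + Real.exp (-L/2) * Real.exp (-L/2)) / 2 := by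
          rw [h1, h2]
      _ = Real.exp (-L/2) * ((Real.exp (L/2) + Real.exp (-(L/2))) / 2) := by ring_nf
  have hfinal : Real.exp (L * C) * ((1 + Real.exp (-L)) ^ (d - r) * 2 ^ r) * (2:ℝ) ^ (-(d:ℝ))
      ≤ Real.exp (-s ^ 2 / (2 * (1 - (r : ℝ) / d))) := by
    rw [h2d, hdsplit]
    have e1 : Real.exp (L*C) * ((1 + Real.exp (-L)) ^ (d-r) * 2 ^ r) * ((2:ℝ)^r * 2^(d-r))⁻¹
        = Real.exp (L*C) * ((1 + Real.exp (-L)) / 2) ^ (d-r) := by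
      rw [div_pow]
      have h2r : ((2:ℝ)^r) ≠ 0 := by positivity
      have h2m : ((2:ℝ)^(d-r)) ≠ 0 := by positivity
      field_simp
    rw [e1, hcosh', mul_pow, ← Real.exp_nat_mul, ← mul_assoc, ← Real.exp_add]
    have hcb : Real.cosh (L/2) ^ (d-r) ≤ Real.exp ((d-r:ℕ) * ((L/2)^2/2)) := by
      rw [Real.exp_nat_mul]
      exact pow_le_pow_left₀ (Real.cosh_pos _).le (Real.cosh_le_exp_half_sq _) _
    calc Real.exp (L*C + (d-r:ℕ) * (-L/2)) * Real.cosh (L/2) ^ (d-r)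
        ≤ Real.exp (L*C + (d-r:ℕ) * (-L/2)) * Real.exp ((d-r:ℕ) * ((L/2)^2/2)) :=
          mul_le_mul_of_nonneg_left hcb (Real.exp_nonneg _)
      _ = Real.exp (L*C + (d-r:ℕ) * (-L/2) + (d-r:ℕ) * ((L/2)^2/2)) := by
          rw [← Real.exp_add]
      _ = Real.exp (-s ^ 2 / (2 * (1 - (r : ℝ) / d))) := by
          congr 1
          rw [hmnat, hL, hC, ha]
          have hds : Real.sqrt d * Real.sqrt d = d := Real.mul_self_sqrt hdR.le
          set u : ℝ := Real.sqrt d with hu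
          rw [← hds]
          have hu0 : u ≠ 0 := ne_of_gt hsqd
          have hmu : u * u - (r:ℝ) ≠ 0 := by rw [hds]; exact ne_of_gt hmR
          field_simp
          ring
  calc (A.card : ℝ) * 2 ^ (-(d:ℝ))
      ≤ Real.exp (L * C) * ((1 + Real.exp (-L)) ^ (d - r) * 2 ^ r) * 2 ^ (-(d:ℝ)) := by
        apply mul_le_mul_of_nonneg_right step2 (by positivity)
    _ ≤ _ := hfinal
end
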